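/- Fix an integer d ≥ 1 and densities ρ1, ρ2 > 0 with ρ1 + ρ2 < 1, and for t ∈ [0,1] let E(ν) = (1−ν)·e(ρ1/(1−ν)) + t·ν·e(ρ2/ν) on [ρ2, 1−ρ1]. Set t_c = ξ(ρ1/(1−ρ2))/(2d). Then: (i) if 0 ≤ t ≤ t_c, the point ν = ρ2 minimizes E on [ρ2, 1−ρ1]; (ii) if t_c < t < 1, every minimizer ν of E on [ρ2, 1−ρ1] satisfies ρ2 < ν < ρ2/(ρ1+ρ2); (iii) if t = 1, the point ν = ρ2/(ρ1+ρ2) minimizes E on [ρ2, 1−ρ1]. -/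

import Mathlib

open scoped BigOperators

noncomputable section

/-- Lattice dispersion relation `ε_k = 2d − 2 Σᵢ cos kᵢ`. -/
def epsk (d : ℕ) (k : Fin d → ℝ) : ℝ := 2 * d - 2 * ∑ i, Real.cos (k i)

/-- `k` belongs to the Brillouin zone `[−π, π]^d`. -/
def inBZ (d : ℕ) (k : Fin d → ℝ) : Prop := ∀ i, |k i| ≤ Real.pi

/-- Volume of `{k ∈ [−π,π]^d : ε_k < E}`. -/
def volBelow (d : ℕ) (E : ℝ) : ℝ :=
  (MeasureTheory.volume {k : Fin d → ℝ | inBZ d k ∧ epsk d k < E}).toReal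

/-- The Fermi level `ε_F(ρ)`, defined by `ρ = (2π)^{−d}·vol{k ∈ [−π,π]^d : ε_k < ε_F(ρ)}`. -/
def fermiLevel (d : ℕ) (ρ : ℝ) : ℝ :=
  sInf {E : ℝ | ρ ≤ volBelow d E / (2 * Real.pi) ^ d}

/-- Ground-state energy per site of free lattice fermions at density `ρ`:
`e(ρ) = (2π)^{−d} ∫_{ε_k < ε_F(ρ)} ε_k dk`. -/
def enGS (d : ℕ) (ρ : ℝ) : ℝ :=
  (∫ k in {k : Fin d → ℝ | inBZ d k ∧ epsk d k < fermiLevel d ρ}, epsk d k) /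
    (2 * Real.pi) ^ d

/-- `ξ(ρ) = ρ·ε_F(ρ) − e(ρ)`. -/
def xiFun (d : ℕ) (ρ : ℝ) : ℝ := ρ * fermiLevel d ρ - enGS d ρ

open MeasureTheory Set Real


lemma continuous_epsk (d : ℕ) : Continuous (epsk d) := by
  unfold epsk
  exact continuous_const.sub (continuous_const.mul
    (continuous_finset_sum _ fun i _ => Real.continuous_cos.comp (continuous_apply i)))

lemma epsk_nonneg (d : ℕ) (k : Fin d → ℝ) : 0 ≤ epsk d k := by
  have h : ∑ i, Real.cos (k i) ≤ ∑ _i : Fin d, (1:ℝ) :=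
    Finset.sum_le_sum fun i _ => Real.cos_le_one _
  simp only [Finset.sum_const, Finset.card_univ, Fintype.card_fin, smul_eq_mul, nsmul_eq_mul, mul_one] at h
  unfold epsk; push_cast at h ⊢; nlinarith

lemma epsk_le (d : ℕ) (k : Fin d → ℝ) : epsk d k ≤ 4 * d := by
  have h : ∑ _i : Fin d, (-1:ℝ) ≤ ∑ i, Real.cos (k i) :=
    Finset.sum_le_sum fun i _ => Real.neg_one_le_cos _
  simp only [Finset.sum_const, Finset.card_univ, Fintype.card_fin, smul_eq_mul, nsmul_eq_mul, mul_neg_one] at h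
  unfold epsk; push_cast at h ⊢; nlinarith

def BZ (d : ℕ) : Set (Fin d → ℝ) := {k | inBZ d k}

lemma BZ_eq (d : ℕ) : BZ d = Set.pi Set.univ (fun _ : Fin d => Icc (-Real.pi) Real.pi) := by
  ext k
  simp only [BZ, inBZ, mem_setOf_eq, Set.mem_pi, Set.mem_univ, forall_true_left, Set.mem_Icc]
  exact forall_congr' fun i => abs_le

lemma measurableSet_BZ (d : ℕ) : MeasurableSet (BZ d) := by
  rw [BZ_eq]
  exact MeasurableSet.univ_pi fun i => measurableSet_Icc

lemma volume_BZ (d : ℕ) : volume (BZ d) = ENNReal.ofReal ((2 * Real.pi) ^ d) := by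
  rw [BZ_eq, volume_pi_pi]
  simp only [Real.volume_Icc]
  rw [Finset.prod_const, Finset.card_univ, Fintype.card_fin,
    show Real.pi - -Real.pi = 2 * Real.pi by ring, ← ENNReal.ofReal_pow (by positivity)]

def Slev (d : ℕ) (E : ℝ) : Set (Fin d → ℝ) := {k | inBZ d k ∧ epsk d k < E}

lemma Slev_subset_BZ (d : ℕ) (E : ℝ) : Slev d E ⊆ BZ d := fun k hk => hk.1

lemma measurableSet_Slev (d : ℕ) (E : ℝ) : MeasurableSet (Slev d E) := by
  have : Slev d E = BZ d ∩ {k | epsk d k < E} := rfl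
  rw [this]
  exact (measurableSet_BZ d).inter (measurableSet_lt (continuous_epsk d).measurable
    measurable_const)

lemma Slev_vol_lt_top (d : ℕ) (E : ℝ) : volume (Slev d E) < ⊤ :=
  lt_of_le_of_lt (measure_mono (Slev_subset_BZ d E)) (by rw [volume_BZ]; exact ENNReal.ofReal_lt_top)

lemma Slev_mono (d : ℕ) {E E' : ℝ} (h : E ≤ E') : Slev d E ⊆ Slev d E' :=
  fun k hk => ⟨hk.1, lt_of_lt_of_le hk.2 h⟩

lemma cos_level_countable (c : ℝ) : Set.Countable {x : ℝ | Real.cos x = c} := by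
  rcases eq_empty_or_nonempty {x : ℝ | Real.cos x = c} with h | ⟨x0, hx0⟩
  · rw [h]; exact countable_empty
  · have hx0' : Real.cos x0 = c := hx0
    have hsub : {x : ℝ | Real.cos x = c} ⊆
        ⋃ k : ℤ, ({x0 - 2 * k * Real.pi, 2 * k * Real.pi - x0} : Set ℝ) := by
      intro x hx
      have : Real.cos x0 = Real.cos x := by rw [hx0']; exact hx.symm
      rw [Real.cos_eq_cos_iff] at this
      obtain ⟨k, hk | hk⟩ := this
      · exact Set.mem_iUnion.2 ⟨-k, Or.inl (by push_cast; linarith)⟩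
      · exact Set.mem_iUnion.2 ⟨k, Or.inr (by rw [hk]; exact Set.mem_singleton _)⟩
    exact Set.Countable.mono hsub (countable_iUnion fun k =>
      ((Set.countable_singleton _).insert _))

lemma cos_level_null (c : ℝ) : volume {x : ℝ | Real.cos x = c} = 0 :=
  (cos_level_countable c).measure_zero _

lemma measurableSet_sumcos (n : ℕ) (c : ℝ) :
    MeasurableSet {k : Fin n → ℝ | ∑ i, Real.cos (k i) = c} := by
  have hc : Continuous fun k : Fin n → ℝ => ∑ i, Real.cos (k i) :=
    continuous_finset_sum _ fun i _ => Real.continuous_cos.comp (continuous_apply i)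
  exact hc.measurable (measurableSet_singleton c)

lemma sumcos_null : ∀ n : ℕ, 1 ≤ n → ∀ c : ℝ,
    volume {k : Fin n → ℝ | ∑ i, Real.cos (k i) = c} = 0 := by
  intro n
  induction n with
  | zero => intro h; omega
  | succ m ih =>
    intro _ c
    rcases Nat.eq_zero_or_pos m with hm | hm
    · subst hm
      have hmp := (volume_preserving_funUnique (Fin 1) ℝ).symm
      have := hmp.measure_preimage
        (measurableSet_sumcos 1 c).nullMeasurableSet
      have himg : (MeasurableEquiv.funUnique (Fin 1) ℝ).symm ⁻¹'
          {k : Fin 1 → ℝ | ∑ i, Real.cos (k i) = c} = {x : ℝ | Real.cos x = c} := by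
        ext x
        simp [MeasurableEquiv.funUnique, Fin.sum_univ_one]
      rw [himg] at this
      have h0 := cos_level_null c
      rw [this] at h0
      exact h0
    · have hmp := (volume_preserving_piFinSuccAbove (fun _ : Fin (m + 1) => ℝ) 0).symm
      have hms : MeasurableSet {k : Fin (m+1) → ℝ | ∑ i, Real.cos (k i) = c} :=
        measurableSet_sumcos (m+1) c
      have key := hmp.measure_preimage hms.nullMeasurableSet
      have himg : (MeasurableEquiv.piFinSuccAbove (fun _ : Fin (m + 1) => ℝ) 0).symm ⁻¹'
          {k : Fin (m+1) → ℝ | ∑ i, Real.cos (k i) = c}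
          = {p : ℝ × (Fin m → ℝ) | Real.cos p.1 + ∑ j, Real.cos (p.2 j) = c} := by
        ext ⟨x, y⟩
        simp only [Set.mem_preimage, Set.mem_setOf_eq, MeasurableEquiv.piFinSuccAbove_symm_apply,
          Fin.insertNthEquiv_zero]
        simp [Fin.sum_univ_succ]
      rw [himg] at key
      rw [← key]
      have hms2 : MeasurableSet {p : ℝ × (Fin m → ℝ) | Real.cos p.1 + ∑ j, Real.cos (p.2 j) = c} := by
        have hc : Continuous fun p : ℝ × (Fin m → ℝ) => Real.cos p.1 + ∑ j, Real.cos (p.2 j) :=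
          (Real.continuous_cos.comp continuous_fst).add
            (continuous_finset_sum _ fun j _ =>
              Real.continuous_cos.comp ((continuous_apply j).comp continuous_snd))
        exact hc.measurable (measurableSet_singleton c)
      rw [show (volume : Measure (ℝ × (Fin m → ℝ))) = (volume : Measure ℝ).prod volume from rfl]
      rw [MeasureTheory.Measure.prod_apply_symm hms2]
      have : ∀ y : Fin m → ℝ,
          (volume ((fun x => (x, y)) ⁻¹' {p : ℝ × (Fin m → ℝ) | Real.cos p.1 + ∑ j, Real.cos (p.2 j) = c})) = 0 := by
        intro y
        have : ((fun x : ℝ => (x, y)) ⁻¹' {p : ℝ × (Fin m → ℝ) | Real.cos p.1 + ∑ j, Real.cos (p.2 j) = c})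
            = {x : ℝ | Real.cos x = c - ∑ j, Real.cos (y j)} := by
          ext x; simp only [Set.mem_preimage, Set.mem_setOf_eq]; constructor <;> intro h <;> linarith
        rw [this]; exact cos_level_null _
      simp only [this, lintegral_zero]

lemma epsk_level_null (d : ℕ) (hd : 1 ≤ d) (E : ℝ) :
    volume {k : Fin d → ℝ | inBZ d k ∧ epsk d k = E} = 0 := by
  refine measure_mono_null ?_ (sumcos_null d hd ((2 * d - E) / 2))
  intro k hk
  have h := hk.2
  unfold epsk at h
  simp only [mem_setOf_eq]
  linarith

lemma twopi_pow_pos (d : ℕ) : 0 < (2 * Real.pi) ^ d := by positivity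

lemma volBelow_def (d : ℕ) (E : ℝ) : volBelow d E = (volume (Slev d E)).toReal := rfl

lemma volBelow_nonneg (d : ℕ) (E : ℝ) : 0 ≤ volBelow d E := ENNReal.toReal_nonneg

lemma volBelow_mono (d : ℕ) {E E' : ℝ} (h : E ≤ E') : volBelow d E ≤ volBelow d E' := by
  rw [volBelow_def, volBelow_def]
  exact ENNReal.toReal_mono (Slev_vol_lt_top d E').ne (measure_mono (Slev_mono d h))

lemma Slev_empty (d : ℕ) {E : ℝ} (h : E ≤ 0) : Slev d E = ∅ := by
  ext k
  simp only [Slev, mem_setOf_eq, Set.mem_empty_iff_false, iff_false, not_and, not_lt]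
  exact fun _ => le_trans h (epsk_nonneg d k)

lemma volBelow_of_nonpos (d : ℕ) {E : ℝ} (h : E ≤ 0) : volBelow d E = 0 := by
  rw [volBelow_def, Slev_empty d h]; simp

lemma volBelow_4d (d : ℕ) (hd : 1 ≤ d) : volBelow d (4 * d) = (2 * Real.pi) ^ d := by
  have hBZ : BZ d = Slev d (4 * d) ∪ {k : Fin d → ℝ | inBZ d k ∧ epsk d k = 4 * d} := by
    ext k
    constructor
    · intro hk
      rcases lt_or_eq_of_le (epsk_le d k) with h | h
      · exact Or.inl ⟨hk, h⟩
      · exact Or.inr ⟨hk, h⟩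
    · rintro (h | h) <;> exact h.1
  have : volume (BZ d) ≤ volume (Slev d (4 * d)) := by
    rw [hBZ]
    calc volume (Slev d (4*d) ∪ {k : Fin d → ℝ | inBZ d k ∧ epsk d k = 4 * d})
        ≤ volume (Slev d (4*d)) + volume {k : Fin d → ℝ | inBZ d k ∧ epsk d k = 4 * d} :=
          measure_union_le _ _
      _ = volume (Slev d (4*d)) := by rw [epsk_level_null d hd, add_zero]
  have h2 : volume (Slev d (4*d)) = volume (BZ d) :=
    le_antisymm (measure_mono (Slev_subset_BZ d _)) this
  rw [volBelow_def, h2, volume_BZ, ENNReal.toReal_ofReal (twopi_pow_pos d).le]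

lemma volBelow_strict_mono (d : ℕ) (hd : 1 ≤ d) {E E' : ℝ} (h0 : 0 ≤ E) (hEE' : E < E')
    (h4 : E' ≤ 4 * d) : volBelow d E < volBelow d E' := by
  have hdpos : (0:ℝ) < d := by exact_mod_cast Nat.pos_of_ne_zero (by omega)
  set m := (E + E') / 2 with hm
  have hmE : E < m := by rw [hm]; linarith
  have hmE' : m < E' := by rw [hm]; linarith
  have hm0 : 0 < m := lt_of_le_of_lt h0 hmE
  have hm4 : m < 4 * d := lt_of_lt_of_le hmE' h4
  set cc := 1 - m / (2 * d) with hcc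
  have hcc1 : cc < 1 := by rw [hcc]; have : 0 < m / (2*d) := by positivity
                           linarith
  have hccm1 : -1 < cc := by
    rw [hcc]
    have : m / (2 * d) < 2 := by rw [div_lt_iff₀ (by positivity)]; linarith
    linarith
  set s := Real.arccos cc with hs
  have hs0 : 0 < s := Real.arccos_pos.2 hcc1
  have hspi : s < Real.pi := by
    rw [hs, Real.arccos, sub_lt_iff_lt_add]
    have := Real.neg_pi_div_two_lt_arcsin.2 hccm1
    linarith
  have hcos : Real.cos s = cc := Real.cos_arccos hccm1.le (by linarith)
  set kstar : Fin d → ℝ := fun _ => s with hk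
  have hval : epsk d kstar = m := by
    unfold epsk
    rw [hk]
    simp only [hcos]
    rw [Finset.sum_const, Finset.card_univ, Fintype.card_fin, nsmul_eq_mul]
    rw [hcc]
    field_simp
    ring
  set U : Set (Fin d → ℝ) :=
    {k | (∀ i, k i ∈ Ioo (-Real.pi) Real.pi) ∧ E < epsk d k ∧ epsk d k < E'} with hU
  have hUopen : IsOpen U := by
    have h1 : IsOpen {k : Fin d → ℝ | ∀ i, k i ∈ Ioo (-Real.pi) Real.pi} := by
      have he : {k : Fin d → ℝ | ∀ i, k i ∈ Ioo (-Real.pi) Real.pi}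
          = Set.pi Set.univ fun _ : Fin d => Ioo (-Real.pi) Real.pi := by
        ext k; simp [Set.mem_pi]
      rw [he]
      exact isOpen_set_pi Set.finite_univ fun i _ => isOpen_Ioo
    have h2 : IsOpen {k : Fin d → ℝ | E < epsk d k} :=
      isOpen_lt continuous_const (continuous_epsk d)
    have h3 : IsOpen {k : Fin d → ℝ | epsk d k < E'} :=
      isOpen_lt (continuous_epsk d) continuous_const
    exact h1.inter (h2.inter h3)
  have hkU : kstar ∈ U := by
    refine ⟨fun i => ⟨?_, hspi⟩, by rw [hval]; exact hmE, by rw [hval]; exact hmE'⟩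
    have := Real.pi_pos
    linarith
  have hUpos : 0 < volume U := hUopen.measure_pos volume ⟨kstar, hkU⟩
  have hdisj : Disjoint (Slev d E) U := by
    rw [Set.disjoint_left]
    rintro k ⟨_, hlt⟩ ⟨_, hgt, _⟩
    exact absurd hlt (not_lt.2 hgt.le)
  have hsub : Slev d E ∪ U ⊆ Slev d E' := by
    rintro k (hk | hk)
    · exact Slev_mono d hEE'.le hk
    · exact ⟨fun i => (abs_le.2 ⟨(hk.1 i).1.le, (hk.1 i).2.le⟩), hk.2.2⟩
  have hmeas : volume (Slev d E) + volume U ≤ volume (Slev d E') := by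
    rw [← measure_union hdisj hUopen.measurableSet]
    exact measure_mono hsub
  have hlt : volume (Slev d E) < volume (Slev d E') :=
    lt_of_lt_of_le (ENNReal.lt_add_right (Slev_vol_lt_top d E).ne hUpos.ne') hmeas
  rw [volBelow_def, volBelow_def]
  exact ENNReal.toReal_strict_mono (Slev_vol_lt_top d E').ne hlt

-- Fermi level set
def Tset (d : ℕ) (ρ : ℝ) : Set ℝ := {E : ℝ | ρ ≤ volBelow d E / (2 * Real.pi) ^ d}

lemma fermiLevel_eq_sInf (d : ℕ) (ρ : ℝ) : fermiLevel d ρ = sInf (Tset d ρ) := rfl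

lemma mem_Tset_4d (d : ℕ) (hd : 1 ≤ d) {ρ : ℝ} (hρ : ρ ≤ 1) : (4 * (d:ℝ)) ∈ Tset d ρ := by
  simp only [Tset, mem_setOf_eq, volBelow_4d d hd]
  rw [div_self (twopi_pow_pos d).ne']
  exact hρ

lemma Tset_pos (d : ℕ) {ρ : ℝ} (hρ : 0 < ρ) {E : ℝ} (hE : E ∈ Tset d ρ) : 0 < E := by
  by_contra h
  push_neg at h
  have := hE
  simp only [Tset, mem_setOf_eq, volBelow_of_nonpos d h] at this
  rw [zero_div] at this
  linarith

lemma Tset_bddBelow (d : ℕ) {ρ : ℝ} (hρ : 0 < ρ) : BddBelow (Tset d ρ) :=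
  ⟨0, fun E hE => (Tset_pos d hρ hE).le⟩

lemma Tset_upward (d : ℕ) (ρ : ℝ) {E E' : ℝ} (hE : E ∈ Tset d ρ) (h : E ≤ E') : E' ∈ Tset d ρ := by
  simp only [Tset, mem_setOf_eq] at hE ⊢
  exact le_trans hE (div_le_div_of_nonneg_right (volBelow_mono d h) (twopi_pow_pos d).le)

lemma Tset_nonempty (d : ℕ) (hd : 1 ≤ d) {ρ : ℝ} (hρ : ρ ≤ 1) : (Tset d ρ).Nonempty :=
  ⟨4 * d, mem_Tset_4d d hd hρ⟩

lemma fermiLevel_nonneg (d : ℕ) (hd : 1 ≤ d) {ρ : ℝ} (hρ0 : 0 < ρ) (hρ1 : ρ ≤ 1) :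
    0 ≤ fermiLevel d ρ := by
  rw [fermiLevel_eq_sInf]
  exact le_csInf (Tset_nonempty d hd hρ1) fun E hE => (Tset_pos d hρ0 hE).le

lemma fermiLevel_le_4d (d : ℕ) (hd : 1 ≤ d) {ρ : ℝ} (hρ0 : 0 < ρ) (hρ1 : ρ ≤ 1) :
    fermiLevel d ρ ≤ 4 * d := by
  rw [fermiLevel_eq_sInf]
  exact csInf_le (Tset_bddBelow d hρ0) (mem_Tset_4d d hd hρ1)

lemma mem_Tset_of_gt (d : ℕ) (hd : 1 ≤ d) {ρ : ℝ} (hρ0 : 0 < ρ) (hρ1 : ρ ≤ 1) {E : ℝ}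
    (h : fermiLevel d ρ < E) : E ∈ Tset d ρ := by
  rw [fermiLevel_eq_sInf] at h
  obtain ⟨b, hb, hbE⟩ := (csInf_lt_iff (Tset_bddBelow d hρ0) (Tset_nonempty d hd hρ1)).1 h
  exact Tset_upward d ρ hb hbE.le

lemma volBelow_lt_of_lt_fermi (d : ℕ) {ρ : ℝ} (hρ0 : 0 < ρ) {E : ℝ}
    (h : E < fermiLevel d ρ) : volBelow d E < ρ * (2 * Real.pi) ^ d := by
  have hnm : E ∉ Tset d ρ := fun hmem => absurd (csInf_le (Tset_bddBelow d hρ0) hmem) (not_le.2 h)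
  simp only [Tset, mem_setOf_eq, not_le] at hnm
  rw [div_lt_iff₀ (twopi_pow_pos d)] at hnm
  linarith [hnm]

lemma volBelow_fermiLevel (d : ℕ) (hd : 1 ≤ d) {ρ : ℝ} (hρ0 : 0 < ρ) (hρ1 : ρ ≤ 1) :
    volBelow d (fermiLevel d ρ) = ρ * (2 * Real.pi) ^ d := by
  set F := fermiLevel d ρ with hF
  have hρπ : 0 ≤ ρ * (2 * Real.pi) ^ d := by positivity
  -- upper bound
  have hub : volBelow d F ≤ ρ * (2 * Real.pi) ^ d := by
    have hun : Slev d F = ⋃ n : ℕ, Slev d (F - 1 / (n + 1)) := by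
      ext k
      simp only [Set.mem_iUnion]
      constructor
      · rintro ⟨hk, hlt⟩
        obtain ⟨n, hn⟩ := exists_nat_one_div_lt (show 0 < F - epsk d k by linarith)
        exact ⟨n, hk, by push_cast at hn ⊢; linarith⟩
      · rintro ⟨n, hk, hlt⟩
        refine ⟨hk, lt_of_lt_of_le hlt ?_⟩
        have : (0:ℝ) < 1 / (n + 1) := by positivity
        linarith
    have hmon : Monotone fun n : ℕ => Slev d (F - 1 / (n + 1)) := by
      intro a b hab
      apply Slev_mono
      have hab' : (a:ℝ) ≤ b := Nat.cast_le.2 hab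
      have : (1:ℝ) / (b + 1) ≤ 1 / (a + 1) := by
        apply one_div_le_one_div_of_le (by positivity)
        linarith
      linarith
    have := hmon.measure_iUnion (μ := volume)
    rw [← hun] at this
    have hbd : ∀ n : ℕ, volume (Slev d (F - 1 / (n + 1))) ≤ ENNReal.ofReal (ρ * (2 * Real.pi) ^ d) := by
      intro n
      have hlt : F - 1 / (n + 1) < F := by
        have : (0:ℝ) < 1 / (n + 1) := by positivity
        linarith
      have := (volBelow_lt_of_lt_fermi d hρ0 hlt).le
      rw [volBelow_def] at this
      exact ENNReal.le_ofReal_iff_toReal_le (Slev_vol_lt_top d _).ne hρπ |>.2 this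
    rw [volBelow_def, this]
    calc (⨆ n : ℕ, volume (Slev d (F - 1 / (n + 1)))).toReal
        ≤ (ENNReal.ofReal (ρ * (2 * Real.pi) ^ d)).toReal := by
          apply ENNReal.toReal_mono ENNReal.ofReal_ne_top
          exact iSup_le hbd
      _ = ρ * (2 * Real.pi) ^ d := ENNReal.toReal_ofReal hρπ
  -- lower bound
  have hlb : ρ * (2 * Real.pi) ^ d ≤ volBelow d F := by
    set C : Set (Fin d → ℝ) := {k | inBZ d k ∧ epsk d k ≤ F} with hC
    have hCint : C = ⋂ n : ℕ, Slev d (F + 1 / (n + 1)) := by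
      ext k
      simp only [Set.mem_iInter, hC, mem_setOf_eq, Slev]
      constructor
      · rintro ⟨hk, hle⟩ n
        refine ⟨hk, lt_of_le_of_lt hle ?_⟩
        have : (0:ℝ) < 1 / (n + 1) := by positivity
        linarith
      · intro h
        refine ⟨(h 0).1, ?_⟩
        by_contra hcon
        push_neg at hcon
        obtain ⟨n, hn⟩ := exists_nat_one_div_lt (show 0 < epsk d k - F by linarith)
        have := (h n).2
        push_cast at hn
        linarith
    have hdir : Directed (· ⊇ ·) fun n : ℕ => Slev d (F + 1 / (n + 1)) := by
      intro a b
      refine ⟨max a b, Slev_mono d ?_, Slev_mono d ?_⟩ <;>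
      · apply add_le_add_right
        apply one_div_le_one_div_of_le (by positivity)
        have h1 : (a:ℝ) ≤ (max a b : ℕ) := Nat.cast_le.2 (le_max_left a b)
        have h2 : (b:ℝ) ≤ (max a b : ℕ) := Nat.cast_le.2 (le_max_right a b)
        push_cast at h1 h2 ⊢
        first
        | linarith
        | linarith
    have hCvol : volume C = ⨅ n : ℕ, volume (Slev d (F + 1 / (n + 1))) := by
      rw [hCint]
      exact Directed.measure_iInter (fun n => (measurableSet_Slev d _).nullMeasurableSet)
        hdir ⟨0, (Slev_vol_lt_top d _).ne⟩
    have hCbd : ENNReal.ofReal (ρ * (2 * Real.pi) ^ d) ≤ volume C := by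
      rw [hCvol]
      refine le_iInf fun n => ?_
      have hmem : F + 1 / (n + 1) ∈ Tset d ρ := by
        apply mem_Tset_of_gt d hd hρ0 hρ1
        have : (0:ℝ) < 1 / (n + 1) := by positivity
        linarith
      simp only [Tset, mem_setOf_eq] at hmem
      rw [le_div_iff₀ (twopi_pow_pos d)] at hmem
      rw [volBelow_def] at hmem
      exact ENNReal.ofReal_le_of_le_toReal hmem
    have hCle : volume C ≤ volume (Slev d F) := by
      have hsplit : C ⊆ Slev d F ∪ {k : Fin d → ℝ | inBZ d k ∧ epsk d k = F} := by
        rintro k ⟨hk, hle⟩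
        rcases lt_or_eq_of_le hle with h | h
        · exact Or.inl ⟨hk, h⟩
        · exact Or.inr ⟨hk, h⟩
      calc volume C ≤ volume (Slev d F) + volume {k : Fin d → ℝ | inBZ d k ∧ epsk d k = F} :=
            le_trans (measure_mono hsplit) (measure_union_le _ _)
        _ = volume (Slev d F) := by rw [epsk_level_null d hd, add_zero]
    have := le_trans hCbd hCle
    rw [volBelow_def]
    calc ρ * (2 * Real.pi) ^ d = (ENNReal.ofReal (ρ * (2 * Real.pi) ^ d)).toReal :=
          (ENNReal.toReal_ofReal hρπ).symm
      _ ≤ (volume (Slev d F)).toReal :=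
          ENNReal.toReal_mono (Slev_vol_lt_top d F).ne this
  linarith

lemma fermiLevel_pos (d : ℕ) (hd : 1 ≤ d) {ρ : ℝ} (hρ0 : 0 < ρ) (hρ1 : ρ ≤ 1) :
    0 < fermiLevel d ρ := by
  rcases lt_or_eq_of_le (fermiLevel_nonneg d hd hρ0 hρ1) with h | h
  · exact h
  · exfalso
    have := volBelow_fermiLevel d hd hρ0 hρ1
    rw [← h, volBelow_of_nonpos d le_rfl] at this
    have : 0 < ρ * (2 * Real.pi) ^ d := by positivity
    linarith [volBelow_fermiLevel d hd hρ0 hρ1, this]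

lemma fermiLevel_mono (d : ℕ) (hd : 1 ≤ d) {ρ ρ' : ℝ} (hρ0 : 0 < ρ) (hρ'1 : ρ' ≤ 1)
    (h : ρ ≤ ρ') : fermiLevel d ρ ≤ fermiLevel d ρ' := by
  rw [fermiLevel_eq_sInf, fermiLevel_eq_sInf]
  apply csInf_le_csInf (Tset_bddBelow d hρ0) (Tset_nonempty d hd hρ'1)
  intro E hE
  simp only [Tset, mem_setOf_eq] at hE ⊢
  linarith

lemma fermiLevel_strictMono (d : ℕ) (hd : 1 ≤ d) {ρ ρ' : ℝ} (hρ0 : 0 < ρ) (hρ'1 : ρ' ≤ 1)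
    (h : ρ < ρ') : fermiLevel d ρ < fermiLevel d ρ' := by
  rcases lt_or_ge (fermiLevel d ρ) (fermiLevel d ρ') with hlt | hle
  · exact hlt
  · exfalso
    have h1 := volBelow_fermiLevel d hd hρ0 (le_of_lt (lt_of_lt_of_le h hρ'1))
    have h2 := volBelow_fermiLevel d hd (lt_trans hρ0 h) hρ'1
    have := volBelow_mono d hle
    rw [h1, h2] at this
    have hπ := twopi_pow_pos d
    nlinarith

/-- continuity of the Fermi level, upper estimate -/
lemma fermiLevel_cont_upper (d : ℕ) (hd : 1 ≤ d) {ρ : ℝ} (hρ0 : 0 < ρ) (hρ1 : ρ ≤ 1)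
    {c : ℝ} (hc : 0 < c) :
    ∃ δ > 0, ∀ ρ' : ℝ, 0 < ρ' → ρ' ≤ 1 → ρ' < ρ + δ →
      fermiLevel d ρ' < fermiLevel d ρ + c := by
  set F := fermiLevel d ρ with hF
  rcases le_or_gt (F + c / 2) (4 * d) with h4 | h4
  · have hstrict : volBelow d F < volBelow d (F + c / 2) :=
      volBelow_strict_mono d hd (fermiLevel_nonneg d hd hρ0 hρ1) (by linarith) h4
    rw [volBelow_fermiLevel d hd hρ0 hρ1] at hstrict
    refine ⟨volBelow d (F + c / 2) / (2 * Real.pi) ^ d - ρ, ?_, ?_⟩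
    · rw [gt_iff_lt, sub_pos, lt_div_iff₀ (twopi_pow_pos d)]
      linarith
    · intro ρ' hρ'0 hρ'1 hlt
      have hmem : (F + c / 2) ∈ Tset d ρ' := by
        simp only [Tset, mem_setOf_eq]
        linarith
      have := csInf_le (Tset_bddBelow d hρ'0) hmem
      rw [fermiLevel_eq_sInf]
      linarith
  · refine ⟨1, one_pos, fun ρ' hρ'0 hρ'1 _ => ?_⟩
    have := fermiLevel_le_4d d hd hρ'0 hρ'1
    linarith

/-- continuity of the Fermi level, lower estimate -/
lemma fermiLevel_cont_lower (d : ℕ) (hd : 1 ≤ d) {ρ : ℝ} (hρ0 : 0 < ρ) (hρ1 : ρ ≤ 1)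
    {c : ℝ} (hc : 0 < c) :
    ∃ δ > 0, ∀ ρ' : ℝ, 0 < ρ' → ρ' ≤ 1 → ρ - δ < ρ' →
      fermiLevel d ρ - c < fermiLevel d ρ' := by
  set F := fermiLevel d ρ with hF
  rcases lt_or_ge (F - c / 2) 0 with h0 | h0
  · refine ⟨1, one_pos, fun ρ' hρ'0 hρ'1 _ => ?_⟩
    have := fermiLevel_nonneg d hd hρ'0 hρ'1
    linarith
  · have hF4 : F ≤ 4 * d := fermiLevel_le_4d d hd hρ0 hρ1
    have hstrict : volBelow d (F - c / 2) < volBelow d F :=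
      volBelow_strict_mono d hd h0 (by linarith) hF4
    rw [volBelow_fermiLevel d hd hρ0 hρ1] at hstrict
    refine ⟨ρ - volBelow d (F - c / 2) / (2 * Real.pi) ^ d, ?_, ?_⟩
    · rw [gt_iff_lt, sub_pos, div_lt_iff₀ (twopi_pow_pos d)]
      linarith
    · intro ρ' hρ'0 hρ'1 hlt
      have hlb : ∀ E ∈ Tset d ρ', F - c / 2 ≤ E := by
        intro E hE
        by_contra hcon
        push_neg at hcon
        have hmono := volBelow_mono d hcon.le
        simp only [Tset, mem_setOf_eq] at hE
        rw [le_div_iff₀ (twopi_pow_pos d)] at hE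
        have hπ := twopi_pow_pos d
        have h1 : volBelow d (F - c/2) / (2 * Real.pi) ^ d < ρ' := by linarith
        rw [div_lt_iff₀ (twopi_pow_pos d)] at h1
        linarith
      have : F - c / 2 ≤ fermiLevel d ρ' := by
        rw [fermiLevel_eq_sInf]
        exact le_csInf (Tset_nonempty d hd hρ'1) hlb
      linarith

-- Part D : energy and xi

lemma enGS_def (d : ℕ) (ρ : ℝ) :
    enGS d ρ = (∫ k in Slev d (fermiLevel d ρ), epsk d k) / (2 * Real.pi) ^ d := rfl

lemma integrableOn_epsk (d : ℕ) {s : Set (Fin d → ℝ)} (hs : MeasurableSet s)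
    (hfin : volume s < ⊤) : IntegrableOn (epsk d) s volume := by
  apply Integrable.mono' (g := fun _ => (4 * d : ℝ))
  · exact integrableOn_const hfin.ne
  · exact ((continuous_epsk d).aestronglyMeasurable).restrict
  · filter_upwards with k
    rw [Real.norm_eq_abs, abs_le]
    exact ⟨by linarith [epsk_nonneg d k, (by positivity : (0:ℝ) ≤ 4 * (d:ℝ))], epsk_le d k⟩

lemma integral_eps_sub_mono (d : ℕ) {F F' c : ℝ} (h : F ≤ F') :
    ∫ k in Slev d F, (epsk d k - c) ≤ ∫ k in Slev d F', (epsk d k - c) → True := fun _ => trivial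

lemma supporting_ineq (d : ℕ) {F F' c : ℝ} (hcF : c ≤ F) (hFc : True) :
    True := trivial

lemma bathtub (d : ℕ) (F F' : ℝ) (h : F ≤ F') :
    ∫ k in Slev d F, (epsk d k - F) ≤ ∫ k in Slev d F', (epsk d k - F) := by
  have hsub : Slev d F ⊆ Slev d F' := Slev_mono d h
  have hint : IntegrableOn (fun k => epsk d k - F) (Slev d F') volume := by
    apply Integrable.sub (integrableOn_epsk d (measurableSet_Slev d F') (Slev_vol_lt_top d F'))
    exact integrableOn_const (Slev_vol_lt_top d F').ne
  have hdiff := MeasureTheory.integral_diff (measurableSet_Slev d F) hint hsub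
  have hnn : 0 ≤ ∫ k in Slev d F' \ Slev d F, (epsk d k - F) := by
    apply setIntegral_nonneg ((measurableSet_Slev d F').diff (measurableSet_Slev d F))
    rintro k ⟨hk', hk⟩
    have : ¬ epsk d k < F := fun hlt => hk ⟨hk'.1, hlt⟩
    linarith [not_lt.1 this]
  linarith [hdiff, hnn]

lemma bathtub' (d : ℕ) (F F' : ℝ) (h : F' ≤ F) :
    ∫ k in Slev d F, (epsk d k - F) ≤ ∫ k in Slev d F', (epsk d k - F) := by
  have hsub : Slev d F' ⊆ Slev d F := Slev_mono d h
  have hint : IntegrableOn (fun k => epsk d k - F) (Slev d F) volume := by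
    apply Integrable.sub (integrableOn_epsk d (measurableSet_Slev d F) (Slev_vol_lt_top d F))
    exact integrableOn_const (Slev_vol_lt_top d F).ne
  have hdiff := MeasureTheory.integral_diff (measurableSet_Slev d F') hint hsub
  have hnp : ∫ k in Slev d F \ Slev d F', (epsk d k - F) ≤ 0 := by
    apply setIntegral_nonpos ((measurableSet_Slev d F).diff (measurableSet_Slev d F'))
    rintro k ⟨hk, _⟩
    linarith [hk.2]
  linarith [hdiff, hnp]

lemma integral_sub_const (d : ℕ) (F c : ℝ) :
    ∫ k in Slev d F, (epsk d k - c)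
      = (∫ k in Slev d F, epsk d k) - c * volBelow d F := by
  rw [MeasureTheory.integral_sub (integrableOn_epsk d (measurableSet_Slev d F)
      (Slev_vol_lt_top d F)) (integrableOn_const (Slev_vol_lt_top d F).ne)]
  rw [setIntegral_const, measureReal_def, volBelow_def, smul_eq_mul, mul_comm]

/-- supporting line inequality : `e(ρ') ≥ e(ρ) + ε_F(ρ)(ρ'-ρ)` -/
lemma supporting_line (d : ℕ) (hd : 1 ≤ d) {ρ ρ' : ℝ}
    (hρ : ρ ∈ Ioc (0:ℝ) 1) (hρ' : ρ' ∈ Ioc (0:ℝ) 1) :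
    enGS d ρ + fermiLevel d ρ * (ρ' - ρ) ≤ enGS d ρ' := by
  set F := fermiLevel d ρ with hF
  set F' := fermiLevel d ρ' with hF'
  have hbath : ∫ k in Slev d F, (epsk d k - F) ≤ ∫ k in Slev d F', (epsk d k - F) := by
    rcases le_total F F' with h | h
    · exact bathtub d F F' h
    · exact bathtub' d F F' h
  rw [integral_sub_const, integral_sub_const] at hbath
  rw [volBelow_fermiLevel d hd hρ.1 hρ.2, volBelow_fermiLevel d hd hρ'.1 hρ'.2] at hbath
  have h2 : (∫ k in Slev d F, epsk d k) + F * (ρ' - ρ) * (2 * Real.pi) ^ d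
      ≤ ∫ k in Slev d F', epsk d k := by nlinarith [hbath]
  rw [enGS_def, enGS_def, ← hF, ← hF', div_add' _ _ _ (twopi_pow_pos d).ne',
    div_le_div_iff_of_pos_right (twopi_pow_pos d)]
  exact h2

lemma fermi_bounds (d : ℕ) (hd : 1 ≤ d) {ρ : ℝ} (hρ : ρ ∈ Ioc (0:ℝ) 1) :
    0 < fermiLevel d ρ ∧ fermiLevel d ρ ≤ 4 * d :=
  ⟨fermiLevel_pos d hd hρ.1 hρ.2, fermiLevel_le_4d d hd hρ.1 hρ.2⟩

lemma enGS_lipschitz (d : ℕ) (hd : 1 ≤ d) {ρ ρ' : ℝ}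
    (hρ : ρ ∈ Ioc (0:ℝ) 1) (hρ' : ρ' ∈ Ioc (0:ℝ) 1) :
    |enGS d ρ' - enGS d ρ| ≤ 4 * d * |ρ' - ρ| := by
  have h1 := supporting_line d hd hρ hρ'
  have h2 := supporting_line d hd hρ' hρ
  obtain ⟨hb1, hb2⟩ := fermi_bounds d hd hρ
  obtain ⟨hb3, hb4⟩ := fermi_bounds d hd hρ'
  rw [abs_le]
  rcases abs_cases (ρ' - ρ) with ⟨he, _⟩ | ⟨he, _⟩ <;> constructor <;> nlinarith

lemma xi_mono (d : ℕ) (hd : 1 ≤ d) {ρ ρ' : ℝ}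
    (hρ : ρ ∈ Ioc (0:ℝ) 1) (hρ' : ρ' ∈ Ioc (0:ℝ) 1) (h : ρ ≤ ρ') :
    xiFun d ρ ≤ xiFun d ρ' := by
  have h2 := supporting_line d hd hρ' hρ
  have hmono := fermiLevel_mono d hd hρ.1 hρ'.2 h
  unfold xiFun
  nlinarith [hρ.1]

lemma xi_pos (d : ℕ) (hd : 1 ≤ d) {ρ : ℝ} (hρ : ρ ∈ Ioc (0:ℝ) 1) : 0 < xiFun d ρ := by
  set F := fermiLevel d ρ with hF
  have hkey : 0 < ∫ k in Slev d F, (F - epsk d k) := by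
    rw [setIntegral_pos_iff_support_of_nonneg_ae]
    · have hsub : Slev d F ⊆ Function.support (fun k => F - epsk d k) := by
        intro k hk
        simp only [Function.mem_support]
        have := hk.2
        intro hzero
        rw [sub_eq_zero] at hzero
        rw [← hzero] at this
        exact lt_irrefl _ this
      have : volume (Slev d F) ≤ volume (Function.support (fun k => F - epsk d k) ∩ Slev d F) :=
        measure_mono (fun k hk => ⟨hsub hk, hk⟩)
      refine lt_of_lt_of_le ?_ this
      have hvol : (volume (Slev d F)).toReal = ρ * (2 * Real.pi) ^ d := by
        rw [← volBelow_def]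
        exact volBelow_fermiLevel d hd hρ.1 hρ.2
      rcases (eq_or_ne (volume (Slev d F)) 0) with h0 | h0
      · exfalso
        rw [h0] at hvol
        simp only [ENNReal.toReal_zero] at hvol
        have hpos : 0 < ρ * (2 * Real.pi) ^ d := mul_pos hρ.1 (twopi_pow_pos d)
        linarith
      · exact pos_iff_ne_zero.2 h0
    · rw [Filter.EventuallyLE, ae_restrict_iff' (measurableSet_Slev d F)]
      filter_upwards with k hk
      simp only [Pi.zero_apply]
      linarith [hk.2]
    · apply Integrable.sub (integrableOn_const (C := F) (Slev_vol_lt_top d F).ne)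
      exact integrableOn_epsk d (measurableSet_Slev d F) (Slev_vol_lt_top d F)
  have hrw : ∫ k in Slev d F, (F - epsk d k)
      = F * (ρ * (2 * Real.pi) ^ d) - (∫ k in Slev d F, epsk d k) := by
    rw [MeasureTheory.integral_sub (integrableOn_const (C := F) (Slev_vol_lt_top d F).ne)
      (integrableOn_epsk d (measurableSet_Slev d F) (Slev_vol_lt_top d F)), setIntegral_const, measureReal_def,
      smul_eq_mul, ← volBelow_def, volBelow_fermiLevel d hd hρ.1 hρ.2]
    ring
  rw [hrw] at hkey
  unfold xiFun
  rw [enGS_def, ← hF]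
  have hπ := twopi_pow_pos d
  rw [sub_pos, div_lt_iff₀ hπ]
  nlinarith [hkey]


lemma fermiLevel_one (d : ℕ) (hd : 1 ≤ d) : fermiLevel d 1 = 4 * d := by
  rw [fermiLevel_eq_sInf]
  apply le_antisymm
  · exact csInf_le (Tset_bddBelow d one_pos) (mem_Tset_4d d hd le_rfl)
  · apply le_csInf (Tset_nonempty d hd le_rfl)
    intro E hE
    by_contra hcon
    push_neg at hcon
    rcases le_or_gt E 0 with h0 | h0
    · have := Tset_pos d one_pos hE
      linarith
    · have hstrict := volBelow_strict_mono d hd h0.le hcon le_rfl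
      rw [volBelow_4d d hd] at hstrict
      simp only [Tset, mem_setOf_eq] at hE
      rw [le_div_iff₀ (twopi_pow_pos d), one_mul] at hE
      linarith

lemma integral_cos_BZ (d : ℕ) (i : Fin d) : ∫ k in BZ d, Real.cos (k i) = 0 := by
  classical
  have hrw : ∫ k in BZ d, Real.cos (k i)
      = ∫ k : Fin d → ℝ, ∏ j,
          (Set.indicator (Icc (-Real.pi) Real.pi)
            (fun x => if j = i then Real.cos x else 1)) (k j) := by
    rw [← integral_indicator (measurableSet_BZ d)]
    congr 1
    funext k
    by_cases hk : k ∈ BZ d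
    · rw [Set.indicator_of_mem hk]
      have hmem : ∀ j, (k j) ∈ Icc (-Real.pi) Real.pi := fun j => abs_le.1 (hk j)
      rw [Finset.prod_congr rfl (fun j _ => Set.indicator_of_mem (hmem j) _)]
      simp
    · rw [Set.indicator_of_notMem hk]
      obtain ⟨j0, hj0⟩ : ∃ j, k j ∉ Icc (-Real.pi) Real.pi := by
        by_contra hall
        push_neg at hall
        exact hk fun j => abs_le.2 ⟨(hall j).1, (hall j).2⟩
      exact (Finset.prod_eq_zero (Finset.mem_univ j0)
        (Set.indicator_of_notMem hj0 _)).symm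
  rw [hrw, MeasureTheory.integral_fintype_prod_volume_eq_prod]
  apply Finset.prod_eq_zero (Finset.mem_univ i)
  simp only [if_pos rfl]
  rw [integral_indicator measurableSet_Icc]
  rw [MeasureTheory.integral_Icc_eq_integral_Ioc,
    ← intervalIntegral.integral_of_le (by linarith [Real.pi_pos])]
  simp [Real.sin_pi]

lemma integrable_cos_BZ (d : ℕ) (i : Fin d) :
    IntegrableOn (fun k : Fin d → ℝ => Real.cos (k i)) (BZ d) volume := by
  have hfin : volume (BZ d) < ⊤ := by rw [volume_BZ]; exact ENNReal.ofReal_lt_top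
  apply Integrable.mono' (g := fun _ => (1 : ℝ))
  · exact integrableOn_const hfin.ne
  · exact (Real.continuous_cos.comp (continuous_apply i)).aestronglyMeasurable.restrict
  · filter_upwards with k
    rw [Real.norm_eq_abs]
    exact Real.abs_cos_le_one _

lemma integral_epsk_BZ (d : ℕ) :
    ∫ k in BZ d, epsk d k = 2 * d * (2 * Real.pi) ^ d := by
  have hfin : volume (BZ d) < ⊤ := by rw [volume_BZ]; exact ENNReal.ofReal_lt_top
  have hint2 : IntegrableOn (fun k : Fin d → ℝ => ∑ i, Real.cos (k i)) (BZ d) volume :=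
    MeasureTheory.integrable_finset_sum _ fun i _ => integrable_cos_BZ d i
  have : ∫ k in BZ d, epsk d k
      = ∫ k in BZ d, ((2 * d : ℝ) - 2 * ∑ i, Real.cos (k i)) := rfl
  rw [this, MeasureTheory.integral_sub (integrableOn_const (C := (2 * d : ℝ)) hfin.ne) (hint2.const_mul 2),
    setIntegral_const, measureReal_def, MeasureTheory.integral_const_mul,
    MeasureTheory.integral_finset_sum _ fun i _ => integrable_cos_BZ d i]
  simp only [integral_cos_BZ]
  rw [Finset.sum_const_zero]
  rw [volume_BZ, ENNReal.toReal_ofReal (twopi_pow_pos d).le, smul_eq_mul]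
  ring

lemma Slev_ae_BZ (d : ℕ) (hd : 1 ≤ d) : Slev d (4 * d) =ᵐ[volume] BZ d := by
  rw [MeasureTheory.ae_eq_set]
  constructor
  · have he : Slev d (4 * d) \ BZ d = ∅ := by
      rw [Set.diff_eq_empty]
      exact Slev_subset_BZ d _
    rw [he]
    simp
  · refine measure_mono_null ?_ (epsk_level_null d hd (4 * d))
    rintro k ⟨hk, hns⟩
    have hnl : ¬ epsk d k < 4 * d := fun h => hns ⟨hk, h⟩
    exact ⟨hk, le_antisymm (epsk_le d k) (not_lt.1 hnl)⟩

lemma enGS_one (d : ℕ) (hd : 1 ≤ d) : enGS d 1 = 2 * d := by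
  rw [enGS_def, fermiLevel_one d hd, setIntegral_congr_set (Slev_ae_BZ d hd),
    integral_epsk_BZ d, mul_div_assoc, div_self (twopi_pow_pos d).ne', mul_one]

lemma xiFun_one (d : ℕ) (hd : 1 ≤ d) : xiFun d 1 = 2 * d := by
  unfold xiFun
  rw [fermiLevel_one d hd, enGS_one d hd]
  ring

set_option maxHeartbeats 1000000 in
lemma xi_cont (d : ℕ) (hd : 1 ≤ d) {ρ : ℝ} (hρ : ρ ∈ Ioc (0:ℝ) 1) {c : ℝ} (hc : 0 < c) :
    ∃ δ > 0, ∀ ρ' ∈ Ioc (0:ℝ) 1, |ρ' - ρ| < δ → |xiFun d ρ' - xiFun d ρ| < c := by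
  obtain ⟨δ1, hδ1, hu⟩ := fermiLevel_cont_upper d hd hρ.1 hρ.2 (show (0:ℝ) < c/4 by linarith)
  obtain ⟨δ2, hδ2, hl⟩ := fermiLevel_cont_lower d hd hρ.1 hρ.2 (show (0:ℝ) < c/4 by linarith)
  have hdpos : (1:ℝ) ≤ d := by exact_mod_cast hd
  set δ3 : ℝ := c / (4 * (8 * d + 1)) with hδ3def
  have hδ3 : 0 < δ3 := by positivity
  refine ⟨min (min δ1 δ2) δ3, by positivity, ?_⟩
  intro ρ' hρ' habs
  have h1 : |ρ' - ρ| < δ1 := lt_of_lt_of_le habs (le_trans (min_le_left _ _) (min_le_left _ _))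
  have h2 : |ρ' - ρ| < δ2 := lt_of_lt_of_le habs (le_trans (min_le_left _ _) (min_le_right _ _))
  have h3 : |ρ' - ρ| < δ3 := lt_of_lt_of_le habs (min_le_right _ _)
  obtain ⟨ha1, ha2⟩ := abs_lt.1 h1
  obtain ⟨hb1, hb2⟩ := abs_lt.1 h2
  have hFu : fermiLevel d ρ' < fermiLevel d ρ + c/4 := hu ρ' hρ'.1 hρ'.2 (by linarith)
  have hFl : fermiLevel d ρ - c/4 < fermiLevel d ρ' := hl ρ' hρ'.1 hρ'.2 (by linarith)
  have hLip := enGS_lipschitz d hd hρ hρ'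
  obtain ⟨hL1, hL2⟩ := abs_le.1 hLip
  obtain ⟨hFb1, hFb2⟩ := fermi_bounds d hd hρ'
  obtain ⟨hFb3, hFb4⟩ := fermi_bounds d hd hρ
  -- bound ρ' F' - ρ F = (ρ' - ρ) F' + ρ (F' - F)
  have hprod1 : (ρ' - ρ) * fermiLevel d ρ' ≤ |ρ' - ρ| * (4 * d) := by
    have := le_abs_self (ρ' - ρ)
    nlinarith [abs_nonneg (ρ' - ρ)]
  have hprod1' : -(|ρ' - ρ| * (4 * d)) ≤ (ρ' - ρ) * fermiLevel d ρ' := by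
    have := neg_abs_le (ρ' - ρ)
    nlinarith [abs_nonneg (ρ' - ρ)]
  have hprod2 : ρ * (fermiLevel d ρ' - fermiLevel d ρ) ≤ c/4 := by
    nlinarith [hρ.1.le, hρ.2, hFu]
  have hprod2' : -(c/4) ≤ ρ * (fermiLevel d ρ' - fermiLevel d ρ) := by
    nlinarith [hρ.1.le, hρ.2, hFl]
  have h8 : 8 * (d:ℝ) * |ρ' - ρ| < c / 4 := by
    have ha := abs_nonneg (ρ' - ρ)
    have hlt : |ρ' - ρ| < c / (4 * (8 * d + 1)) := h3
    have h0 : (0:ℝ) < 4 * (8 * (d:ℝ) + 1) := by positivity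
    rw [lt_div_iff₀ h0] at hlt
    linarith
  have hdecomp : xiFun d ρ' - xiFun d ρ
      = (ρ' - ρ) * fermiLevel d ρ' + ρ * (fermiLevel d ρ' - fermiLevel d ρ)
        - (enGS d ρ' - enGS d ρ) := by
    unfold xiFun
    ring
  rw [hdecomp, abs_lt]
  constructor <;> linarith

-- PARTE

lemma u_mem {r1 r2 ν : ℝ} (h1 : 0 < r1) (h2 : 0 < r2) (hν : ν ∈ Icc r2 (1 - r1)) :
    r1 / (1 - ν) ∈ Ioc (0:ℝ) 1 := by
  obtain ⟨ha, hb⟩ := hν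
  have h1ν : 0 < 1 - ν := by linarith
  constructor
  · positivity
  · rw [div_le_one h1ν]
    linarith

lemma v_mem {r1 r2 ν : ℝ} (h1 : 0 < r1) (h2 : 0 < r2) (hν : ν ∈ Icc r2 (1 - r1)) :
    r2 / ν ∈ Ioc (0:ℝ) 1 := by
  obtain ⟨ha, hb⟩ := hν
  have hν0 : 0 < ν := lt_of_lt_of_le h2 ha
  exact ⟨by positivity, by rw [div_le_one hν0]; exact ha⟩

lemma key_lower (d : ℕ) (hd : 1 ≤ d) {r1 r2 t ν ν' : ℝ}
    (h1 : 0 < r1) (h2 : 0 < r2) (ht : 0 ≤ t)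
    (hν : ν ∈ Icc r2 (1 - r1)) (hν' : ν' ∈ Icc r2 (1 - r1)) (hle : ν ≤ ν') :
    (ν' - ν) * (xiFun d (r1 / (1 - ν)) - t * xiFun d (r2 / ν))
      ≤ ((1 - ν') * enGS d (r1 / (1 - ν')) + t * ν' * enGS d (r2 / ν'))
        - ((1 - ν) * enGS d (r1 / (1 - ν)) + t * ν * enGS d (r2 / ν)) := by
  obtain ⟨hν1, hν2⟩ := hν
  obtain ⟨hν'1, hν'2⟩ := hν'
  have hν0 : 0 < ν := lt_of_lt_of_le h2 hν1
  have hν'0 : 0 < ν' := lt_of_lt_of_le h2 hν'1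
  have h1ν : 0 < 1 - ν := by linarith
  have h1ν' : 0 < 1 - ν' := by linarith
  set u := r1 / (1 - ν) with hudef
  set u' := r1 / (1 - ν') with hu'def
  set v := r2 / ν with hvdef
  set v' := r2 / ν' with hv'def
  have hu : (1 - ν) * u = r1 := by rw [hudef]; field_simp
  have hu' : (1 - ν') * u' = r1 := by rw [hu'def]; field_simp
  have hv : ν * v = r2 := by rw [hvdef]; field_simp
  have hv' : ν' * v' = r2 := by rw [hv'def]; field_simp
  have hsl1 := supporting_line d hd (u_mem h1 h2 ⟨hν1, hν2⟩) (u_mem h1 h2 ⟨hν'1, hν'2⟩)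
  have hsl2 := supporting_line d hd (v_mem h1 h2 ⟨hν1, hν2⟩) (v_mem h1 h2 ⟨hν'1, hν'2⟩)
  have hid1F : (1 - ν') * (fermiLevel d u * (u' - u)) = (ν' - ν) * (u * fermiLevel d u) := by
    linear_combination fermiLevel d u * (hu' - hu)
  have hid2F : ν' * (fermiLevel d v * (v' - v)) = -((ν' - ν) * (v * fermiLevel d v)) := by
    linear_combination fermiLevel d v * (hv' - hv)
  have hm1 := mul_le_mul_of_nonneg_left hsl1 h1ν'.le
  have hm2 := mul_le_mul_of_nonneg_left hsl2 hν'0.le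
  have hT1 : (ν' - ν) * xiFun d u ≤ (1 - ν') * enGS d u' - (1 - ν) * enGS d u := by
    unfold xiFun
    nlinarith [hm1, hid1F]
  have hT2 : -((ν' - ν) * xiFun d v) ≤ ν' * enGS d v' - ν * enGS d v := by
    unfold xiFun
    nlinarith [hm2, hid2F]
  have hT2t := mul_le_mul_of_nonneg_left hT2 ht
  nlinarith [hT1, hT2t]

lemma key_upper (d : ℕ) (hd : 1 ≤ d) {r1 r2 t ν ν' : ℝ}
    (h1 : 0 < r1) (h2 : 0 < r2) (ht : 0 ≤ t)
    (hν : ν ∈ Icc r2 (1 - r1)) (hν' : ν' ∈ Icc r2 (1 - r1)) (hle : ν ≤ ν') :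
    ((1 - ν') * enGS d (r1 / (1 - ν')) + t * ν' * enGS d (r2 / ν'))
        - ((1 - ν) * enGS d (r1 / (1 - ν)) + t * ν * enGS d (r2 / ν))
      ≤ (ν' - ν) * (xiFun d (r1 / (1 - ν')) - t * xiFun d (r2 / ν')) := by
  obtain ⟨hν1, hν2⟩ := hν
  obtain ⟨hν'1, hν'2⟩ := hν'
  have hν0 : 0 < ν := lt_of_lt_of_le h2 hν1
  have hν'0 : 0 < ν' := lt_of_lt_of_le h2 hν'1
  have h1ν : 0 < 1 - ν := by linarith
  have h1ν' : 0 < 1 - ν' := by linarith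
  set u := r1 / (1 - ν) with hudef
  set u' := r1 / (1 - ν') with hu'def
  set v := r2 / ν with hvdef
  set v' := r2 / ν' with hv'def
  have hu : (1 - ν) * u = r1 := by rw [hudef]; field_simp
  have hu' : (1 - ν') * u' = r1 := by rw [hu'def]; field_simp
  have hv : ν * v = r2 := by rw [hvdef]; field_simp
  have hv' : ν' * v' = r2 := by rw [hv'def]; field_simp
  have hsl1 := supporting_line d hd (u_mem h1 h2 ⟨hν'1, hν'2⟩) (u_mem h1 h2 ⟨hν1, hν2⟩)
  have hsl2 := supporting_line d hd (v_mem h1 h2 ⟨hν'1, hν'2⟩) (v_mem h1 h2 ⟨hν1, hν2⟩)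
  have hid1F : (1 - ν) * (fermiLevel d u' * (u - u')) = -((ν' - ν) * (u' * fermiLevel d u')) := by
    linear_combination fermiLevel d u' * (hu - hu')
  have hid2F : ν * (fermiLevel d v' * (v - v')) = (ν' - ν) * (v' * fermiLevel d v') := by
    linear_combination fermiLevel d v' * (hv - hv')
  have hm1 := mul_le_mul_of_nonneg_left hsl1 h1ν.le
  have hm2 := mul_le_mul_of_nonneg_left hsl2 hν0.le
  have hT1 : (1 - ν') * enGS d u' - (1 - ν) * enGS d u ≤ (ν' - ν) * xiFun d u' := by
    unfold xiFun
    nlinarith [hm1, hid1F]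
  have hT2 : ν' * enGS d v' - ν * enGS d v ≤ -((ν' - ν) * xiFun d v') := by
    unfold xiFun
    nlinarith [hm2, hid2F]
  have hT2t := mul_le_mul_of_nonneg_left hT2 ht
  nlinarith [hT1, hT2t]

set_option maxHeartbeats 1000000 in
/-- For `d ≥ 1`, densities `ρ1, ρ2 > 0` with `ρ1 + ρ2 < 1`, and `t ∈ [0,1]`, consider
`E_t(ν) = (1−ν)·e(ρ1/(1−ν)) + t·ν·e(ρ2/ν)` on `[ρ2, 1−ρ1]` and set
`t_c = ξ(ρ1/(1−ρ2))/(2d)`. Then: (i) if `0 ≤ t ≤ t_c` then `ν = ρ2` minimizes `E_t`;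
(ii) if `t_c < t < 1` then every minimizer `ν` satisfies `ρ2 < ν < ρ2/(ρ1+ρ2)`;
(iii) if `t = 1` then `ν = ρ2/(ρ1+ρ2)` minimizes `E_t`. -/
theorem segregated_energy_minimizers (d : ℕ) (hd : 1 ≤ d) (ρ1 ρ2 : ℝ)
    (h1 : 0 < ρ1) (h2 : 0 < ρ2) (hsum : ρ1 + ρ2 < 1)
    (E : ℝ → ℝ → ℝ)
    (hE : ∀ t ν, E t ν = (1 - ν) * enGS d (ρ1 / (1 - ν)) + t * ν * enGS d (ρ2 / ν))
    (tc : ℝ) (htc : tc = xiFun d (ρ1 / (1 - ρ2)) / (2 * d)) :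
    (∀ t, 0 ≤ t → t ≤ tc → ∀ ν ∈ Set.Icc ρ2 (1 - ρ1), E t ρ2 ≤ E t ν) ∧
    (∀ t, tc < t → t < 1 → ∀ ν ∈ Set.Icc ρ2 (1 - ρ1),
      (∀ ν' ∈ Set.Icc ρ2 (1 - ρ1), E t ν ≤ E t ν') →
        ρ2 < ν ∧ ν < ρ2 / (ρ1 + ρ2)) ∧
    (∀ ν ∈ Set.Icc ρ2 (1 - ρ1), E 1 (ρ2 / (ρ1 + ρ2)) ≤ E 1 ν) := by
  have hd' : (1:ℝ) ≤ d := by exact_mod_cast hd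
  have h2d : (0:ℝ) < 2 * d := by linarith
  have hr21 : ρ2 < 1 - ρ1 := by linarith
  have hρ2mem : ρ2 ∈ Icc ρ2 (1 - ρ1) := ⟨le_rfl, by linarith⟩
  have hvρ2 : ρ2 / ρ2 = 1 := div_self h2.ne'
  have hr12pos : 0 < ρ1 + ρ2 := by linarith
  set ν0 := ρ2 / (ρ1 + ρ2) with hν0def
  have hν0gt : ρ2 < ν0 := by
    rw [hν0def, lt_div_iff₀ hr12pos]
    nlinarith
  have hν0lt : ν0 < 1 - ρ1 := by
    rw [hν0def, div_lt_iff₀ hr12pos]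
    nlinarith
  have hν0mem : ν0 ∈ Icc ρ2 (1 - ρ1) := ⟨hν0gt.le, hν0lt.le⟩
  have h1ν0 : 1 - ν0 = ρ1 / (ρ1 + ρ2) := by
    rw [hν0def]
    field_simp
    ring
  have huν0 : ρ1 / (1 - ν0) = ρ1 + ρ2 := by
    rw [h1ν0, div_div_eq_mul_div, mul_comm, mul_div_assoc, div_self h1.ne', mul_one]
  have hvν0 : ρ2 / ν0 = ρ1 + ρ2 := by
    rw [hν0def]
    field_simp
  have hr12mem : ρ1 + ρ2 ∈ Ioc (0:ℝ) 1 := ⟨hr12pos, hsum.le⟩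
  have hu2mem : ρ1 / (1 - ρ2) ∈ Ioc (0:ℝ) 1 := u_mem h1 h2 hρ2mem
  refine ⟨?_, ?_, ?_⟩
  -- (i)
  · intro t ht htle ν hν
    have hk := key_lower d hd h1 h2 ht hρ2mem hν hν.1
    rw [hE t ρ2, hE t ν, hvρ2]
    rw [hvρ2, xiFun_one d hd] at hk
    have h0 : 0 ≤ (ν - ρ2) * (xiFun d (ρ1 / (1 - ρ2)) - t * (2 * d)) := by
      apply mul_nonneg (by linarith [hν.1])
      have : t * (2 * d) ≤ xiFun d (ρ1 / (1 - ρ2)) := by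
        rw [htc, le_div_iff₀ h2d] at htle
        linarith
      linarith
    linarith
  -- (ii)
  · intro t htgt htlt ν hν hmin
    have hXB := xi_pos d hd hu2mem
    have ht0 : 0 ≤ t := by
      have hpos : 0 < xiFun d (ρ1 / (1 - ρ2)) / (2 * d) := by positivity
      rw [htc] at htgt
      linarith
    constructor
    · -- ρ2 < ν
      set c0 := (t * (2 * d) - xiFun d (ρ1 / (1 - ρ2))) / 2 with hc0def
      have hc0 : 0 < c0 := by
        rw [htc, div_lt_iff₀ h2d] at htgt
        rw [hc0def]
        linarith
      obtain ⟨δa, hδa, hcda⟩ := xi_cont d hd hu2mem hc0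
      obtain ⟨δb, hδb, hcdb⟩ := xi_cont d hd (⟨one_pos, le_rfl⟩ : (1:ℝ) ∈ Ioc (0:ℝ) 1) hc0
      set η := min (min (δa * ρ1 / 2) (δb * ρ2 / 2)) ((1 - ρ1 - ρ2) / 2) with hηdef
      have hη : 0 < η := by
        apply lt_min (lt_min (by positivity) (by positivity))
        linarith
      set ν'' := ρ2 + η with hν''def
      have hηc : η ≤ (1 - ρ1 - ρ2) / 2 := min_le_right _ _
      have hν''mem : ν'' ∈ Icc ρ2 (1 - ρ1) := ⟨by rw [hν''def]; linarith, by rw [hν''def]; linarith⟩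
      have hν''0 : 0 < ν'' := lt_of_lt_of_le h2 hν''mem.1
      have h1ν'' : 0 < 1 - ν'' := by linarith [hν''mem.2]
      have h1ρ2 : 0 < 1 - ρ2 := by linarith
      have hub : |ρ1 / (1 - ν'') - ρ1 / (1 - ρ2)| < δa := by
        rw [div_sub_div _ _ h1ν''.ne' h1ρ2.ne', abs_div,
          abs_of_pos (mul_pos h1ν'' h1ρ2), div_lt_iff₀ (mul_pos h1ν'' h1ρ2)]
        have hnum : ρ1 * (1 - ρ2) - (1 - ν'') * ρ1 = ρ1 * η := by rw [hν''def]; ring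
        rw [hnum, abs_of_pos (by positivity : (0:ℝ) < ρ1 * η)]
        have hden : ρ1 * ρ1 ≤ (1 - ν'') * (1 - ρ2) := by
          have ha : ρ1 ≤ 1 - ν'' := by linarith [hν''mem.2]
          have hb : ρ1 ≤ 1 - ρ2 := by linarith
          nlinarith
        have hηa : η ≤ δa * ρ1 / 2 := le_trans (min_le_left _ _) (min_le_left _ _)
        nlinarith
      have hvb : |ρ2 / ν'' - 1| < δb := by
        rw [show ρ2 / ν'' - 1 = (ρ2 - ν'') / ν'' by field_simp, abs_div,
          abs_of_pos hν''0, div_lt_iff₀ hν''0]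
        have hnum : ρ2 - ν'' = -η := by rw [hν''def]; ring
        rw [hnum, abs_neg, abs_of_pos hη]
        have hηb : η ≤ δb * ρ2 / 2 := le_trans (min_le_left _ _) (min_le_right _ _)
        nlinarith [mul_le_mul_of_nonneg_left hν''mem.1 hδb.le]
      have hXu := hcda _ (u_mem h1 h2 hν''mem) hub
      have hXv := hcdb _ (v_mem h1 h2 hν''mem) hvb
      rw [xiFun_one d hd] at hXv
      obtain ⟨hXu1, hXu2⟩ := abs_lt.1 hXu
      obtain ⟨hXv1, hXv2⟩ := abs_lt.1 hXv
      have hC : 2 * (d:ℝ) - c0 < xiFun d (ρ2 / ν'') := by linarith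
      have htC := mul_le_mul_of_nonneg_left hC.le ht0
      have hgneg : xiFun d (ρ1 / (1 - ν'')) - t * xiFun d (ρ2 / ν'') < 0 := by
        have hc0eq : 2 * c0 = t * (2 * d) - xiFun d (ρ1 / (1 - ρ2)) := by
          rw [hc0def]; ring
        linarith [htC, hXu2, mul_pos hc0 (show (0:ℝ) < 1 - t by linarith)]
      have hku := key_upper d hd h1 h2 ht0 hρ2mem hν''mem hν''mem.1
      rw [hvρ2] at hku
      have hElt : E t ν'' < E t ρ2 := by
        rw [hE t ν'', hE t ρ2, hvρ2]
        have hpos : 0 < ν'' - ρ2 := by rw [hν''def]; linarith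
        linarith [hku, mul_neg_of_pos_of_neg hpos hgneg]
      by_contra hcon
      push_neg at hcon
      have hνeq : ν = ρ2 := le_antisymm hcon hν.1
      have hmin' := hmin ν'' hν''mem
      rw [hνeq] at hmin'
      linarith
    · -- ν < ν0
      have hXpos := xi_pos d hd hr12mem
      have hνle : ν ≤ ν0 := by
        by_contra hcon
        push_neg at hcon
        have hk := key_lower d hd h1 h2 ht0 hν0mem hν hcon.le
        rw [huν0, hvν0] at hk
        have hgpos : 0 < xiFun d (ρ1 + ρ2) - t * xiFun d (ρ1 + ρ2) := by
          linarith [mul_pos hXpos (show (0:ℝ) < 1 - t by linarith)]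
        have hlt : E t ν0 < E t ν := by
          rw [hE t ν0, hE t ν, huν0, hvν0]
          linarith [hk, mul_pos (show (0:ℝ) < ν - ν0 by linarith) hgpos]
        have := hmin ν0 hν0mem
        linarith
      set c1 := (1 - t) * xiFun d (ρ1 + ρ2) / 2 with hc1def
      have hc1 : 0 < c1 := by
        rw [hc1def]
        have : 0 < 1 - t := by linarith
        positivity
      obtain ⟨δ, hδ, hcd⟩ := xi_cont d hd hr12mem hc1
      set η := min (min (δ * ρ1 * ρ1 / 2) (δ * ρ2 * ρ2 / 2)) ((ν0 - ρ2) / 2) with hηdef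
      have hη : 0 < η := by
        apply lt_min (lt_min (by positivity) (by positivity))
        linarith
      set ν'' := ν0 - η with hν''def
      have hηc : η ≤ (ν0 - ρ2) / 2 := min_le_right _ _
      have hν''mem : ν'' ∈ Icc ρ2 (1 - ρ1) := ⟨by rw [hν''def]; linarith, by rw [hν''def]; linarith⟩
      have hν''0 : 0 < ν'' := lt_of_lt_of_le h2 hν''mem.1
      have h1ν'' : 0 < 1 - ν'' := by linarith [hν''mem.2]
      have h1ν0' : 0 < 1 - ν0 := by linarith
      have hub : |ρ1 / (1 - ν'') - (ρ1 + ρ2)| < δ := by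
        rw [← huν0, div_sub_div _ _ h1ν''.ne' h1ν0'.ne', abs_div,
          abs_of_pos (mul_pos h1ν'' h1ν0'), div_lt_iff₀ (mul_pos h1ν'' h1ν0')]
        have hnum : ρ1 * (1 - ν0) - (1 - ν'') * ρ1 = -(ρ1 * η) := by rw [hν''def]; ring
        rw [hnum, abs_neg, abs_of_pos (by positivity : (0:ℝ) < ρ1 * η)]
        have hden : ρ1 * ρ1 ≤ (1 - ν'') * (1 - ν0) := by
          have ha : ρ1 ≤ 1 - ν'' := by linarith [hν''mem.2]
          have hb : ρ1 ≤ 1 - ν0 := by linarith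
          nlinarith
        have hηa : η ≤ δ * ρ1 * ρ1 / 2 := le_trans (min_le_left _ _) (min_le_left _ _)
        nlinarith
      have hvb : |ρ2 / ν'' - (ρ1 + ρ2)| < δ := by
        have hν0pos : (0:ℝ) < ν0 := by linarith
        rw [← hvν0, div_sub_div _ _ hν''0.ne' hν0pos.ne', abs_div,
          abs_of_pos (mul_pos hν''0 hν0pos), div_lt_iff₀ (mul_pos hν''0 hν0pos)]
        have hnum : ρ2 * ν0 - ν'' * ρ2 = ρ2 * η := by rw [hν''def]; ring
        rw [hnum, abs_of_pos (by positivity : (0:ℝ) < ρ2 * η)]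
        have hden : ρ2 * ρ2 ≤ ν'' * ν0 := by
          nlinarith [hν''mem.1, hν0gt.le]
        have hηb : η ≤ δ * ρ2 * ρ2 / 2 := le_trans (min_le_left _ _) (min_le_right _ _)
        nlinarith
      have hXu := hcd _ (u_mem h1 h2 hν''mem) hub
      have hXv := hcd _ (v_mem h1 h2 hν''mem) hvb
      obtain ⟨hXu1, hXu2⟩ := abs_lt.1 hXu
      obtain ⟨hXv1, hXv2⟩ := abs_lt.1 hXv
      have hC : xiFun d (ρ2 / ν'') < xiFun d (ρ1 + ρ2) + c1 := by linarith
      have htC := mul_le_mul_of_nonneg_left hC.le ht0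
      have hgpos : 0 < xiFun d (ρ1 / (1 - ν'')) - t * xiFun d (ρ2 / ν'') := by
        have hc1eq : 2 * c1 = (1 - t) * xiFun d (ρ1 + ρ2) := by rw [hc1def]; ring
        linarith [htC, hXu1, mul_pos hc1 (show (0:ℝ) < 1 - t by linarith)]
      rcases lt_or_eq_of_le hνle with hlt | heq
      · exact hlt
      · exfalso
        have hkl := key_lower d hd h1 h2 ht0 hν''mem hν0mem (by rw [hν''def]; linarith)
        have hgt : E t ν'' < E t ν0 := by
          rw [hE t ν'', hE t ν0]
          linarith [hkl, mul_pos (show (0:ℝ) < ν0 - ν'' by rw [hν''def]; linarith) hgpos]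
        have hmin' := hmin ν'' hν''mem
        rw [← heq] at hgt
        linarith
  -- (iii)
  · intro ν hν
    rcases le_total ν ν0 with hle | hle
    · have hku := key_upper d hd h1 h2 zero_le_one hν hν0mem hle
      rw [huν0, hvν0] at hku
      rw [hE 1 ν0, hE 1 ν, huν0, hvν0]
      linarith [hku]
    · have hkl := key_lower d hd h1 h2 zero_le_one hν0mem hν hle
      rw [huν0, hvν0] at hkl
      rw [hE 1 ν0, hE 1 ν, huν0, hvν0]
      linarith [hkl]

end
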